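/- Let P(z) = 1/(1−z)² + 1/(1−conj(z))² − 1 for z in the open unit disc 𝔻. Then ∫_𝔻 |P(z)| dA(z) = +∞, i.e. P is not absolutely integrable over 𝔻 with respect to area measure. -/

import Mathlib

open Complex MeasureTheory
open Set

lemma key1 : ∫⁻ x in Set.Ioo (1/2:ℝ) 1, ENNReal.ofReal ((1-x)⁻¹) = ⊤ := by
  by_contra h
  have hmeas : Measurable fun x : ℝ => (1-x)⁻¹ := (measurable_const.sub measurable_id).inv
  have hpos : ∀ᵐ x ∂(volume.restrict (Ioo (1/2:ℝ) 1)), 0 ≤ (1-x)⁻¹ := by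
    filter_upwards [ae_restrict_mem measurableSet_Ioo] with x hx
    have : (0:ℝ) < 1 - x := by linarith [hx.2]
    positivity
  have hint : IntegrableOn (fun x => (1-x)⁻¹) (Ioo (1/2:ℝ) 1) := by
    refine ⟨hmeas.aestronglyMeasurable, ?_⟩
    rw [hasFiniteIntegral_iff_ofReal hpos]
    exact lt_top_iff_ne_top.2 h
  have hint2 : IntervalIntegrable (fun x => (1-x)⁻¹) volume (1/2) 1 := by
    rw [intervalIntegrable_iff_integrableOn_Ioo_of_le (by norm_num)]
    exact hint
  have hint3 : IntervalIntegrable (fun x : ℝ => (x-1)⁻¹) volume (1/2) 1 := by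
    have h4 : (fun x : ℝ => (x-1)⁻¹) = fun x => -((1-x)⁻¹) := by
      funext x; rw [← inv_neg, neg_sub]
    rw [h4]; exact hint2.neg
  rw [intervalIntegrable_sub_inv_iff] at hint3
  rcases hint3 with h' | h'
  · norm_num at h'
  · exact h' (Set.right_mem_uIcc)


noncomputable def FF : ℝ × ℝ → ENNReal := fun p => ENNReal.ofReal ((24/25) * ((1-p.1)^2)⁻¹ - 1)

def RR : Set (ℝ × ℝ) := {p | p.1 ∈ Set.Ioo (1/2:ℝ) 1 ∧ p.2 ∈ Set.Ioo (-(1-p.1)/2) ((1-p.1)/2)}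

lemma hRRmeas : MeasurableSet RR := by
  have h1 : RR = {p : ℝ × ℝ | 1/2 < p.1} ∩ {p | p.1 < 1} ∩ {p | -(1-p.1)/2 < p.2}
      ∩ {p | p.2 < (1-p.1)/2} := by
    ext p; simp [RR, Set.mem_Ioo]; tauto
  rw [h1]
  refine (((measurableSet_lt measurable_const measurable_fst).inter
    (measurableSet_lt measurable_fst measurable_const)).inter
    (measurableSet_lt (by measurability) measurable_snd)).inter
    (measurableSet_lt measurable_snd (by measurability))

lemma hFmeas : Measurable FF := by
  unfold FF; measurability

lemma key3 : ∫⁻ p in RR, FF p = ⊤ := by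
  rw [Measure.volume_eq_prod, ← lintegral_indicator hRRmeas]
  rw [lintegral_prod _ ((hFmeas.indicator hRRmeas).aemeasurable)]
  have inner : ∀ x : ℝ, (∫⁻ y, RR.indicator FF (x, y)) =
      (Set.Ioo (1/2:ℝ) 1).indicator (fun x => FF (x, 0) * ENNReal.ofReal (1 - x)) x := by
    intro x
    by_cases hx : x ∈ Set.Ioo (1/2:ℝ) 1
    · have h1 : (fun y => RR.indicator FF (x, y)) =
          fun y => (Set.Ioo (-(1-x)/2) ((1-x)/2)).indicator (fun _ => FF (x, 0)) y := by
        funext y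
        by_cases hy : y ∈ Set.Ioo (-(1-x)/2) ((1-x)/2)
        · rw [Set.indicator_of_mem hy, Set.indicator_of_mem (by exact ⟨hx, hy⟩ : (x,y) ∈ RR)]
          rfl
        · rw [Set.indicator_of_notMem hy, Set.indicator_of_notMem]
          intro hmem; exact hy hmem.2
      rw [h1, lintegral_indicator measurableSet_Ioo, setLIntegral_const, Real.volume_Ioo,
        Set.indicator_of_mem hx]
      congr 1
      ring_nf
    · rw [Set.indicator_of_notMem hx]
      have h1 : (fun y => RR.indicator FF (x, y)) = fun _ => 0 := by
        funext y
        rw [Set.indicator_of_notMem]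
        intro hmem; exact hx hmem.1
      rw [h1, lintegral_const, zero_mul]
  simp_rw [inner]
  rw [lintegral_indicator measurableSet_Ioo]
  have hlb : ∀ x ∈ Set.Ioo (1/2:ℝ) 1,
      ENNReal.ofReal (71/100) * ENNReal.ofReal ((1-x)⁻¹) ≤ FF (x, 0) * ENNReal.ofReal (1 - x) := by
    intro x hx
    set a : ℝ := 1 - x with ha
    have ha0 : 0 < a := by simp [ha]; linarith [hx.2]
    have ha12 : a ≤ 1/2 := by simp [ha]; linarith [hx.1]
    have hb : (2:ℝ) ≤ a⁻¹ := by
      have h2 := inv_anti₀ ha0 ha12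
      norm_num at h2
      linarith
    have hsq : (a^2)⁻¹ * a = a⁻¹ := by
      rw [sq, mul_inv]
      field_simp
    have hFF : FF (x, 0) = ENNReal.ofReal ((24/25) * (a^2)⁻¹ - 1) := rfl
    rw [hFF, ← ENNReal.ofReal_mul' ha0.le, ← ENNReal.ofReal_mul (by norm_num)]
    apply ENNReal.ofReal_le_ofReal
    have hexp : ((24/25) * (a^2)⁻¹ - 1) * a = 24/25 * a⁻¹ - a := by
      field_simp
    rw [hexp]
    linarith
  have hge : ∫⁻ x in Set.Ioo (1/2:ℝ) 1, ENNReal.ofReal (71/100) * ENNReal.ofReal ((1-x)⁻¹)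
      ≤ ∫⁻ x in Set.Ioo (1/2:ℝ) 1, FF (x, 0) * ENNReal.ofReal (1 - x) :=
    setLIntegral_mono' measurableSet_Ioo hlb
  have hmeas : Measurable fun x : ℝ => ENNReal.ofReal ((1-x)⁻¹) :=
    ((measurable_const.sub measurable_id).inv).ennreal_ofReal
  rw [lintegral_const_mul _ hmeas, key1, ENNReal.mul_top (by simp)] at hge
  exact top_le_iff.1 hge


lemma key2 (z : ℂ) (hx : z.re ∈ Set.Ioo (1/2:ℝ) 1)
    (hy : z.im ∈ Set.Ioo (-(1-z.re)/2) ((1-z.re)/2)) :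
    (24/25) * ((1 - z.re)^2)⁻¹ - 1 ≤ ‖1 / (1 - z) ^ 2 + 1 / (1 - (starRingEnd ℂ) z) ^ 2 - 1‖ := by
  set a : ℝ := 1 - z.re with ha
  set y : ℝ := z.im with hyy
  have ha0 : 0 < a := by simp [ha]; linarith [hx.2]
  have hy2 : y^2 ≤ a^2/4 := by nlinarith [hy.1, hy.2]
  set w : ℂ := 1 / (1 - z)^2 with hw
  have hconj : 1 / (1 - (starRingEnd ℂ) z) ^ 2 = (starRingEnd ℂ) w := by
    rw [hw, map_div₀, map_pow, map_sub, map_one]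
  have hre : (1 / (1 - z) ^ 2 + 1 / (1 - (starRingEnd ℂ) z) ^ 2 - 1).re = 2 * w.re - 1 := by
    rw [hconj]
    simp [Complex.add_re, Complex.sub_re, Complex.one_re, Complex.conj_re, ← hw]
    ring
  have hwre : w.re = (a^2 - y^2) / ((a^2 + y^2)^2) := by
    rw [hw, one_div, Complex.inv_re, map_pow, sq, Complex.mul_re, Complex.normSq_apply]
    simp [Complex.sub_re, Complex.sub_im, Complex.one_re, Complex.one_im, ← ha, ← hyy]
    ring_nf
  have hineq : (24/25) * (a^2)⁻¹ - 1 ≤ 2 * w.re - 1 := by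
    rw [hwre]
    have h12 : (12/25) * (a^2)⁻¹ ≤ (a^2 - y^2) / ((a^2 + y^2)^2) := by
      rw [inv_eq_one_div, mul_one_div, div_le_div_iff₀ (by positivity) (by positivity)]
      nlinarith [mul_nonneg (by nlinarith : (0:ℝ) ≤ a^2/4 - y^2) (by positivity : (0:ℝ) ≤ y^2 + 13*a^2/3)]
    linarith
  calc (24/25) * (a^2)⁻¹ - 1 ≤ 2 * w.re - 1 := hineq
    _ = (1 / (1 - z) ^ 2 + 1 / (1 - (starRingEnd ℂ) z) ^ 2 - 1).re := hre.symm
    _ ≤ ‖1 / (1 - z) ^ 2 + 1 / (1 - (starRingEnd ℂ) z) ^ 2 - 1‖ := by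
        exact Complex.re_le_norm _


theorem stmt13 :
    ∫⁻ z in Metric.ball (0 : ℂ) 1,
        ENNReal.ofReal ‖1 / (1 - z) ^ 2 + 1 / (1 - (starRingEnd ℂ) z) ^ 2 - 1‖ = ⊤ := by
  set e := Complex.measurableEquivRealProd with he
  set R : Set ℂ := e ⁻¹' RR with hR
  have hsub : R ⊆ Metric.ball (0:ℂ) 1 := by
    intro z hz
    obtain ⟨hx, hy⟩ := (Set.mem_preimage.1 hz : (z.re, z.im) ∈ RR)
    simp only [Metric.mem_ball, dist_zero_right]
    have h1 : ‖z‖ ^ 2 < 1 := by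
      rw [Complex.sq_norm, Complex.normSq_apply]
      nlinarith [hx.1, hx.2, hy.1, hy.2]
    nlinarith [norm_nonneg z]
  have htrans : ∫⁻ z in R, FF (z.re, z.im) = ∫⁻ p in RR, FF p :=
    Complex.volume_preserving_equiv_real_prod.setLIntegral_comp_preimage_emb
      Complex.measurableEquivRealProd.measurableEmbedding FF RR
  have hRmeas : MeasurableSet R := hRRmeas.preimage e.measurable
  have hmono : ∫⁻ z in R, FF (z.re, z.im) ≤
      ∫⁻ z in R, ENNReal.ofReal ‖1 / (1 - z) ^ 2 + 1 / (1 - (starRingEnd ℂ) z) ^ 2 - 1‖ := by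
    refine setLIntegral_mono' hRmeas fun z hz => ?_
    obtain ⟨hx, hy⟩ := (Set.mem_preimage.1 hz : (z.re, z.im) ∈ RR)
    exact ENNReal.ofReal_le_ofReal (key2 z hx hy)
  rw [eq_top_iff]
  calc (⊤ : ENNReal) = ∫⁻ p in RR, FF p := key3.symm
    _ = ∫⁻ z in R, FF (z.re, z.im) := htrans.symm
    _ ≤ ∫⁻ z in R, ENNReal.ofReal ‖1 / (1 - z) ^ 2 + 1 / (1 - (starRingEnd ℂ) z) ^ 2 - 1‖ := hmono
    _ ≤ _ := lintegral_mono_set hsub
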